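/- arXiv:math/0005026 — 2 statements merged into one kernel-verified Lean document; each statement's English description precedes it below -/
import Mathlib

section
/- Let P(x) = x^5 + m x^4 + n x^3 + p x^2 + q x + r over ℂ with roots x₁,…,x₅, and T(x) = x^4 + d x^3 + c x^2 + b x + a. The coefficient of y^4 in ∏_{i}(y + T(xᵢ)) equals ∑_i T(xᵢ), which by Newton's identities equals 5a + b·(-m) + c·(m² - 2n) + d·(-m³ + 3mn - 3p) + (m⁴ - 4m²n + 2n² + 4mp - 4q). Consequently, choosing a = (1/5)·(d m³ + b m − 3 d m n − 2 n² + 4q − c m² + 2 c n − 4 m p + 4 m² n + 3 d p − m⁴) makes this coefficient vanish. -/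
open Polynomial

lemma expand5 (a b c d e : ℂ) :
    (X + C a) * (X + C b) * (X + C c) * (X + C d) * (X + C e) =
      X ^ 5 + C (a + b + c + d + e) * X ^ 4
        + C (a*b + a*c + a*d + a*e + b*c + b*d + b*e + c*d + c*e + d*e) * X ^ 3
        + C (a*b*c + a*b*d + a*b*e + a*c*d + a*c*e + a*d*e + b*c*d + b*c*e + b*d*e + c*d*e) * X ^ 2
        + C (a*b*c*d + a*b*c*e + a*b*d*e + a*c*d*e + b*c*d*e) * X
        + C (a*b*c*d*e) := by
  simp only [map_add, map_mul]
  ring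

lemma coeff4_of (s1 s2 s3 s4 s5 : ℂ) :
    (X ^ 5 + C s1 * X ^ 4 + C s2 * X ^ 3 + C s3 * X ^ 2 + C s4 * X + C s5).coeff 4 = s1 := by
  simp [coeff_X_pow, coeff_C]

open Polynomial Finset in
/-- For the Tschirnhaus transformation `T(x) = x⁴ + d x³ + c x² + b x + a` applied to a
monic quintic with roots `x₁,…,x₅`, the coefficient of `y⁴` in `∏ᵢ (y + T(xᵢ))` equals
`∑ᵢ T(xᵢ)`, which by Newton's identities equals
`5a - bm + c(m² - 2n) + d(-m³ + 3mn - 3p) + (m⁴ - 4m²n + 2n² + 4mp - 4q)`; hence the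
paper's choice of `a` makes this coefficient vanish. -/
theorem stmt_8 (m n p q r a b c d : ℂ) (x : Fin 5 → ℂ)
    (hroots : (∏ i : Fin 5, (X - C (x i))) =
      X ^ 5 + C m * X ^ 4 + C n * X ^ 3 + C p * X ^ 2 + C q * X + C r) :
    (∏ i : Fin 5,
          (X + C ((x i) ^ 4 + d * (x i) ^ 3 + c * (x i) ^ 2 + b * (x i) + a))).coeff 4 =
        ∑ i : Fin 5, ((x i) ^ 4 + d * (x i) ^ 3 + c * (x i) ^ 2 + b * (x i) + a) ∧
      (∑ i : Fin 5, ((x i) ^ 4 + d * (x i) ^ 3 + c * (x i) ^ 2 + b * (x i) + a)) =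
        5 * a + b * (-m) + c * (m ^ 2 - 2 * n) + d * (-m ^ 3 + 3 * m * n - 3 * p) +
          (m ^ 4 - 4 * m ^ 2 * n + 2 * n ^ 2 + 4 * m * p - 4 * q) ∧
      (a = 1 / 5 * (d * m ^ 3 + b * m - 3 * d * m * n - 2 * n ^ 2 + 4 * q - c * m ^ 2 +
            2 * c * n - 4 * m * p + 4 * m ^ 2 * n + 3 * d * p - m ^ 4) →
        (∑ i : Fin 5, ((x i) ^ 4 + d * (x i) ^ 3 + c * (x i) ^ 2 + b * (x i) + a)) = 0) := by
  rw [Fin.prod_univ_five] at hroots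
  simp only [sub_eq_add_neg, ← map_neg C] at hroots
  rw [expand5] at hroots
  have h4 := congrArg (fun f => Polynomial.coeff f 4) hroots
  have h3 := congrArg (fun f => Polynomial.coeff f 3) hroots
  have h2 := congrArg (fun f => Polynomial.coeff f 2) hroots
  have h1 := congrArg (fun f => Polynomial.coeff f 1) hroots
  simp only [coeff_add, coeff_C_mul, coeff_X_pow, coeff_X, coeff_C] at h4 h3 h2 h1
  norm_num at h4 h3 h2 h1
  subst h4 h3 h2 h1
  refine ⟨?_, ?_, ?_⟩
  · rw [Fin.prod_univ_five, expand5, coeff4_of, Fin.sum_univ_five]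
  · rw [Fin.sum_univ_five]; ring
  · intro ha
    rw [Fin.sum_univ_five, ha]; ring
end

section
/- The formal power series u(w) = ∑_{k=0}^∞ binomial(5k,k)/(4k+1) · w^k over ℚ satisfies u(w) = 1 + w·u(w)^5. -/
open Finset PowerSeries

/-- Rothe numbers `A k r = r/(5k+r) * C(5k+r, k)` written without division. -/
def fcA : ℕ → ℕ → ℚ
  | 0, _ => 1
  | (k+1), r => (Nat.choose (5*k+5+r) (k+1) : ℚ) - 5 * (Nat.choose (5*k+4+r) k : ℚ)

lemma fcA_zero (k : ℕ) : fcA (k+1) 0 = 0 := by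
  have h := Nat.add_one_mul_choose_eq (5*k+4) k
  simp only [fcA]
  have h6 : 5*k+5+0 = (5*k+4)+1 := by omega
  have h5 : 5*k+4+0 = 5*k+4 := by omega
  rw [h5, h6]
  have hc : ((5*k+4+1 : ℕ) : ℚ) * (Nat.choose (5*k+4) k : ℚ)
      = (Nat.choose (5*k+4+1) (k+1) : ℚ) * ((k+1 : ℕ) : ℚ) := by
    exact_mod_cast congrArg (Nat.cast (R := ℚ)) h
  have hk : ((k:ℚ)+1) ≠ 0 := by positivity
  have h2 : ((k:ℚ)+1) * ((Nat.choose (5*k+4+1) (k+1) : ℚ) - 5 * (Nat.choose (5*k+4) k : ℚ)) = 0 := by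
    push_cast at hc ⊢
    linear_combination -hc
  rcases mul_eq_zero.mp h2 with h3 | h3
  · exact absurd h3 hk
  · linarith [h3]

lemma fcA_rec (k r : ℕ) : fcA (k+1) (r+1) = fcA (k+1) r + fcA k (r+5) := by
  cases k with
  | zero =>
      simp only [fcA]
      norm_num [Nat.choose_one_right]
  | succ m =>
      simp only [fcA]
      have p1 : Nat.choose (5*(m+1)+5+(r+1)) (m+2) =
          Nat.choose (5*(m+1)+5+r) (m+1) + Nat.choose (5*(m+1)+5+r) (m+2) := by
        have e : 5*(m+1)+5+(r+1) = (5*(m+1)+5+r)+1 := by omega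
        rw [e, Nat.choose_succ_succ']
      have p2 : Nat.choose (5*(m+1)+4+(r+1)) (m+1) =
          Nat.choose (5*(m+1)+4+r) m + Nat.choose (5*(m+1)+4+r) (m+1) := by
        have e : 5*(m+1)+4+(r+1) = (5*(m+1)+4+r)+1 := by omega
        rw [e, Nat.choose_succ_succ']
      have e1 : 5*m+5+(r+5) = 5*(m+1)+5+r := by omega
      have e2 : 5*m+4+(r+5) = 5*(m+1)+4+r := by omega
      rw [e1, e2, p1, p2]
      push_cast
      ring

/-- Key convolution identity (Concrete Mathematics 5.62). -/
lemma fcG : ∀ n r s : ℕ,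
    ∑ k ∈ range (n+1), fcA k r * (Nat.choose (5*(n-k)+s) (n-k) : ℚ)
      = (Nat.choose (5*n+r+s) n : ℚ) := by
  intro n
  induction n with
  | zero => intro r s; simp [fcA]
  | succ n ih =>
      intro r
      induction r with
      | zero =>
          intro s
          rw [Finset.sum_eq_single 0]
          · simp [fcA]
          · intro k _ hk
            obtain ⟨m, rfl⟩ := Nat.exists_eq_succ_of_ne_zero hk
            rw [fcA_zero]; ring
          · intro h; simp at h
      | succ r ihr =>
          intro s
          rw [Finset.sum_range_succ']
          have step : ∀ k ∈ range (n+1),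
              fcA (k+1) (r+1) * (Nat.choose (5*(n+1-(k+1))+s) (n+1-(k+1)) : ℚ)
              = fcA (k+1) r * (Nat.choose (5*(n+1-(k+1))+s) (n+1-(k+1)) : ℚ)
                + fcA k (r+5) * (Nat.choose (5*(n-k)+s) (n-k) : ℚ) := by
            intro k hk
            rw [fcA_rec]
            have e : n+1-(k+1) = n-k := by omega
            rw [e]; ring
          rw [Finset.sum_congr rfl step, Finset.sum_add_distrib]
          have hA0 : fcA 0 (r+1) = fcA 0 r := rfl
          rw [hA0]
          have ihr' := ihr s
          rw [Finset.sum_range_succ'] at ihr'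
          rw [add_right_comm, ihr', ih (r+5) s]
          have e1 : 5*(n+1)+(r+1)+s = (5*n+(r+5)+s)+1 := by omega
          have e2 : 5*(n+1)+r+s = (5*n+(r+5)+s) := by omega
          rw [e1, e2, Nat.choose_succ_succ']
          push_cast
          ring

/-- Rothe–Hagen convolution identity for the `fcA` numbers. -/
lemma fcRothe (n r s : ℕ) :
    ∑ k ∈ range (n+1), fcA k r * fcA (n-k) s = fcA n (r+s) := by
  cases n with
  | zero => simp [fcA]
  | succ n =>
      have split : ∀ k ∈ range (n+2), fcA k r * fcA (n+1-k) s
          = fcA k r * (Nat.choose (5*(n+1-k)+s) (n+1-k) : ℚ)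
            - (if k ≤ n then 5 * (fcA k r * (Nat.choose (5*(n-k)+(s+4)) (n-k) : ℚ)) else 0) := by
        intro k hk
        by_cases h : k ≤ n
        · have h1 : n+1-k = (n-k)+1 := by omega
          simp only [if_pos h, h1, fcA]
          have e1 : 5*(n-k)+5+s = 5*((n-k)+1)+s := by omega
          have e2 : 5*(n-k)+4+s = 5*(n-k)+(s+4) := by omega
          rw [e1, e2]
          ring
        · have hk2 : k = n+1 := by simp at hk; omega
          subst hk2
          simp [fcA]
      rw [Finset.sum_congr rfl split, Finset.sum_sub_distrib]
      rw [fcG (n+1) r s]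
      have h2 : ∑ k ∈ range (n+2),
          (if k ≤ n then 5 * (fcA k r * (Nat.choose (5*(n-k)+(s+4)) (n-k) : ℚ)) else 0)
          = 5 * ∑ k ∈ range (n+1), fcA k r * (Nat.choose (5*(n-k)+(s+4)) (n-k) : ℚ) := by
        rw [Finset.sum_range_succ, if_neg (by omega), add_zero, Finset.mul_sum]
        refine Finset.sum_congr rfl fun k hk => ?_
        rw [if_pos (by simpa [Nat.lt_succ_iff] using hk)]
      rw [h2, fcG n r (s+4)]
      show _ = fcA (n+1) (r+s)
      simp only [fcA]
      have e1 : 5*(n+1)+r+s = 5*n+5+(r+s) := by omega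
      have e2 : 5*n+r+(s+4) = 5*n+4+(r+s) := by omega
      rw [e1, e2]

lemma fcA_one (k : ℕ) : (Nat.choose (5*k) k : ℚ) / (4*k+1) = fcA k 1 := by
  cases k with
  | zero => simp [fcA]
  | succ k =>
      simp only [fcA]
      have p1 : Nat.choose (5*k+5+1) (k+1)
          = Nat.choose (5*k+5) k + Nat.choose (5*k+5) (k+1) := by
        have e : 5*k+5+1 = (5*k+5)+1 := by omega
        rw [e, Nat.choose_succ_succ']
      have hr := Nat.choose_succ_right_eq (5*k+5) k
      have hsub : 5*k+5-k = 4*k+5 := by omega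
      rw [hsub] at hr
      have hrq : (Nat.choose (5*k+5) (k+1) : ℚ) * ((k:ℚ)+1)
          = (Nat.choose (5*k+5) k : ℚ) * (4*(k:ℚ)+5) := by
        exact_mod_cast congrArg (Nat.cast (R := ℚ)) hr
      have e5 : 5*(k+1) = 5*k+5 := by omega
      have e4 : 5*k+4+1 = 5*k+5 := by omega
      rw [e5, e4, p1]
      have hd : (4*((k:ℚ)+1)+1) ≠ 0 := by positivity
      push_cast
      rw [div_eq_iff (by push_cast at hd ⊢; linarith [hd] )]
      push_cast
      nlinarith [hrq]

lemma fcA_shift (n : ℕ) : fcA (n+1) 1 = fcA n 5 := by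
  cases n with
  | zero => norm_num [fcA]
  | succ m =>
      simp only [fcA]
      have p1 : Nat.choose (5*(m+1)+5+1) (m+2)
          = Nat.choose (5*(m+1)+5) (m+1) + Nat.choose (5*(m+1)+5) (m+2) := by
        have e : 5*(m+1)+5+1 = (5*(m+1)+5)+1 := by omega
        rw [e, Nat.choose_succ_succ']
      have p2 : Nat.choose (5*(m+1)+5) (m+1)
          = Nat.choose (5*(m+1)+4) m + Nat.choose (5*(m+1)+4) (m+1) := by
        have e : 5*(m+1)+5 = (5*(m+1)+4)+1 := by omega
        rw [e, Nat.choose_succ_succ']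
      have key : Nat.choose (5*(m+1)+5) (m+2) = 5 * Nat.choose (5*(m+1)+4) (m+1) := by
        have h := Nat.add_one_mul_choose_eq (5*(m+1)+4) (m+1)
        skip
        have e : 5*(m+1)+4+1 = 5*(m+1)+5 := by omega
        rw [e] at h
        have h2 : (5 * Nat.choose (5*(m+1)+4) (m+1)) * (m+2) = Nat.choose (5*(m+1)+5) (m+2) * (m+2) := by
          rw [← h]; ring
        exact (Nat.eq_of_mul_eq_mul_right (by omega) h2).symm
      have e41 : 5*(m+1)+4+1 = 5*(m+1)+5 := by omega
      have e55 : 5*m+5+5 = 5*(m+1)+5 := by omega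
      have e45 : 5*m+4+5 = 5*(m+1)+4 := by omega
      rw [e41, e55, e45, p1, key, p2]
      push_cast
      ring

/-- The formal power series `u(w) = ∑ binomial(5k,k)/(4k+1) wᵏ` of 4-Fuss–Catalan
numbers satisfies the Lagrange-inversion identity `u = 1 + w·u^5`. -/
theorem stmt_14 (u : PowerSeries ℚ)
    (hu : u = PowerSeries.mk fun k => (Nat.choose (5 * k) k : ℚ) / (4 * k + 1)) :
    u = 1 + PowerSeries.X * u ^ 5 := by
  have hcoeff : ∀ n, PowerSeries.coeff n u = fcA n 1 := by
    intro n
    rw [hu, PowerSeries.coeff_mk]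
    exact fcA_one n
  have hpow : ∀ r n, PowerSeries.coeff n (u ^ (r+1)) = fcA n (r+1) := by
    intro r
    induction r with
    | zero => intro n; rw [pow_one]; exact hcoeff n
    | succ r ih =>
        intro n
        rw [pow_succ, PowerSeries.coeff_mul,
          Finset.Nat.sum_antidiagonal_eq_sum_range_succ_mk]
        have : ∀ k ∈ range (n+1),
            PowerSeries.coeff k (u ^ (r+1)) * PowerSeries.coeff (n-k) u
            = fcA k (r+1) * fcA (n-k) 1 := by
          intro k hk
          rw [ih k, hcoeff (n-k)]
        rw [Finset.sum_congr rfl this, fcRothe n (r+1) 1]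
  ext n
  cases n with
  | zero =>
      simp only [map_add, PowerSeries.coeff_one, if_pos rfl]
      rw [hcoeff 0]
      have h0 : PowerSeries.coeff 0 (PowerSeries.X * u ^ 5) = 0 := by
        simp [PowerSeries.coeff_zero_eq_constantCoeff]
      rw [h0]
      simp [fcA]
  | succ n =>
      rw [map_add, PowerSeries.coeff_succ_X_mul, PowerSeries.coeff_one,
        if_neg (Nat.succ_ne_zero n), hcoeff (n+1), fcA_shift n, zero_add]
      exact (hpow 4 n).symm
end
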